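/- Let n₁, n₂, n₃ ≥ 2 be integers with n₁·n₂·n₃ even, and let R = {1,…,n₁}×{1,…,n₂}×{1,…,n₃} ⊂ ℤ³. Let τ be a perfect matching of the subgraph of the grid graph induced on R. Then τ admits a flip or a trit: either there exist two edges of τ that form two opposite sides of some unit lattice square, or there exist three pairwise non-parallel edges of τ that are all contained in a single unit lattice cube (a translate of {0,1}³). -/

import Mathlib

open MeasureTheory Filter

namespace Dimers

/-- Vertices of the grid graph on `ℤ³`. -/
abbrev V : Type := Fin 3 → ℤ

/-- The `i`-th standard unit vector of `ℤ³`. -/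
def unitVec (i : Fin 3) : V := fun j => if j = i then 1 else 0

/-- Grid adjacency: two vertices are adjacent iff they differ by a standard unit vector. -/
def Adj (x y : V) : Prop := ∃ i : Fin 3, y = x + unitVec i ∨ x = y + unitVec i

/-- A vertex is even if its coordinate sum is even. -/
def IsEven (x : V) : Prop := (x 0 + x 1 + x 2) % 2 = 0

instance : DecidablePred IsEven := fun x =>
  inferInstanceAs (Decidable ((x 0 + x 1 + x 2) % 2 = 0))

/-- A dimer tiling (perfect matching) of `ℤ³`, encoded by the involution sending each vertex
to the vertex it is matched with. -/
def IsTiling (m : V → V) : Prop := (∀ x, Adj x (m x)) ∧ ∀ x, m (m x) = x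

/-- `Omega` is the space of dimer tilings of `ℤ³`. -/
abbrev Omega : Type := {m : V → V // IsTiling m}

/-- Two grid edges are parallel if they are translates of each other. -/
def Parallel (e₁ e₂ : Sym2 V) : Prop := ∃ v : V, Sym2.map (fun y => y + v) e₁ = e₂

/-- `InCube x y` says that `y` lies in the unit lattice cube `x + {0,1}³`. -/
def InCube (x y : V) : Prop := ∀ i : Fin 3, y i = x i ∨ y i = x i + 1


/-! ### Auxiliary definitions and lemmas -/

instance instDecInCube (x y : V) : Decidable (InCube x y) :=
  inferInstanceAs (Decidable (∀ i : Fin 3, y i = x i ∨ y i = x i + 1))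

/-- The "flip" alternative of the main theorem. -/
def FlipGoal (τ : Set (Sym2 V)) : Prop :=
  ∃ (x : V) (i j : Fin 3), i ≠ j ∧ s(x, x + unitVec i) ∈ τ ∧
    s(x + unitVec j, x + unitVec i + unitVec j) ∈ τ

/-- The "trit" alternative of the main theorem. -/
def TritGoal (τ : Set (Sym2 V)) : Prop :=
  ∃ (x : V) (e₁ e₂ e₃ : Sym2 V), e₁ ∈ τ ∧ e₂ ∈ τ ∧ e₃ ∈ τ ∧
    ¬ Parallel e₁ e₂ ∧ ¬ Parallel e₁ e₃ ∧ ¬ Parallel e₂ e₃ ∧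
    (∀ y ∈ e₁, InCube x y) ∧ (∀ y ∈ e₂, InCube x y) ∧ (∀ y ∈ e₃, InCube x y)

lemma unitVec_apply (i j : Fin 3) : unitVec i j = if j = i then 1 else 0 := rfl

lemma add_unitVec_same (x : V) (i : Fin 3) : (x + unitVec i) i = x i + 1 := by
  simp [unitVec]

lemma add_unitVec_other (x : V) {i j : Fin 3} (h : j ≠ i) : (x + unitVec i) j = x j := by
  simp [unitVec, h]

lemma adj_symm {x y : V} (h : Adj x y) : Adj y x := by
  obtain ⟨i, h | h⟩ := h
  exacts [⟨i, Or.inr h⟩, ⟨i, Or.inl h⟩]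

lemma not_parallel_of_ne (a b : V) {i j : Fin 3} (hij : i ≠ j) :
    ¬ Parallel s(a, a + unitVec i) s(b, b + unitVec j) := by
  rintro ⟨v, hv⟩
  rw [Sym2.map_pair_eq, Sym2.eq_iff] at hv
  rcases hv with ⟨h1, h2⟩ | ⟨h1, h2⟩ <;>
  · have e1 := congrFun h1 i
    have e2 := congrFun h2 i
    simp [unitVec_apply, hij] at e1 e2
    omega

lemma edge_unique {R : Set V} {τ : Set (Sym2 V)}
    (hedges : ∀ e ∈ τ, ∃ u v : V, e = s(u, v) ∧ Adj u v ∧ u ∈ R ∧ v ∈ R)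
    (hmatch : ∀ x ∈ R, ∃! e, e ∈ τ ∧ x ∈ e)
    {x : V} {e₁ e₂ : Sym2 V} (h1 : e₁ ∈ τ) (h2 : e₂ ∈ τ) (hx1 : x ∈ e₁) (hx2 : x ∈ e₂) :
    e₁ = e₂ := by
  obtain ⟨u, v, he, -, hu, hv⟩ := hedges e₁ h1
  have hxR : x ∈ R := by
    subst he
    rcases Sym2.mem_iff.mp hx1 with rfl | rfl <;> assumption
  obtain ⟨e, -, huniq⟩ := hmatch x hxR
  rw [huniq e₁ ⟨h1, hx1⟩, huniq e₂ ⟨h2, hx2⟩]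

lemma inCube_base {p a : V} {d : Fin 3} (h1 : InCube p a) (h2 : InCube p (a + unitVec d)) :
    a d = p d := by
  have ha := h1 d
  have hb := h2 d
  rw [add_unitVec_same] at hb
  omega

lemma mk_flip {τ : Set (Sym2 V)} {a b : V} {d t : Fin 3} (htd : t ≠ d)
    (ha : s(a, a + unitVec d) ∈ τ) (hb : s(b, b + unitVec d) ∈ τ)
    (hba : b = a + unitVec t) : FlipGoal τ := by
  refine ⟨a, d, t, fun h => htd h.symm, ha, ?_⟩
  have h1 : a + unitVec t = b := hba.symm
  have h2 : a + unitVec d + unitVec t = b + unitVec d := by rw [hba]; ring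
  rw [h1, h2]; exact hb

lemma third_index : ∀ d j : Fin 3, j ≠ d →
    ∃ k, k ≠ d ∧ k ≠ j ∧ ∀ l : Fin 3, l = d ∨ l = j ∨ l = k := by decide

/-- If a `d`-domino and a `j`-domino in the cube at `p` share the lattice line through a
common pair of transverse coordinates, they must literally share a vertex, hence be equal. -/
lemma cube_core {R : Set V} {τ : Set (Sym2 V)}
    (hedges : ∀ e ∈ τ, ∃ u v : V, e = s(u, v) ∧ Adj u v ∧ u ∈ R ∧ v ∈ R)
    (hmatch : ∀ x ∈ R, ∃! e, e ∈ τ ∧ x ∈ e)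
    (p z c : V) (d j k : Fin 3) (hjd : j ≠ d) (hkd : k ≠ d) (hkj : k ≠ j)
    (hall : ∀ l : Fin 3, l = d ∨ l = j ∨ l = k)
    (hcz : InCube p z) (hzd : z d = p d) (hτz : s(z, z + unitVec d) ∈ τ)
    (hcc : InCube p c) (hccj : InCube p (c + unitVec j)) (hτc : s(c, c + unitVec j) ∈ τ)
    (hck : c k = z k) : s(z, z + unitVec d) = s(c, c + unitVec j) := by
  have hcj : c j = p j := inCube_base hcc hccj
  have hzj := hcz j
  have hcd := hcc d
  by_cases hzj1 : z j = p j
  · have hw : c = z ∨ c = z + unitVec d := by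
      rcases hcd with hcd1 | hcd1
      · left; funext l
        rcases hall l with rfl | rfl | rfl <;> omega
      · right; funext l
        rcases hall l with rfl | rfl | rfl
        · rw [add_unitVec_same]; omega
        · rw [add_unitVec_other _ hjd]; omega
        · rw [add_unitVec_other _ hkd]; omega
    exact edge_unique hedges hmatch hτz hτc (Sym2.mem_iff.mpr hw)
      (Sym2.mem_iff.mpr (Or.inl rfl))
  · have hzj2 : z j = p j + 1 := by rcases hzj with h | h; exacts [absurd h hzj1, h]
    have hw : c + unitVec j = z ∨ c + unitVec j = z + unitVec d := by
      rcases hcd with hcd1 | hcd1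
      · left; funext l
        rcases hall l with rfl | rfl | rfl
        · rw [add_unitVec_other _ (Ne.symm hjd)]; omega
        · rw [add_unitVec_same]; omega
        · rw [add_unitVec_other _ hkj]; omega
      · right; funext l
        rcases hall l with rfl | rfl | rfl
        · rw [add_unitVec_other _ (Ne.symm hjd), add_unitVec_same]; omega
        · rw [add_unitVec_same, add_unitVec_other _ hjd]; omega
        · rw [add_unitVec_other _ hkj, add_unitVec_other _ hkd]; omega
    exact edge_unique hedges hmatch hτz hτc (Sym2.mem_iff.mpr hw)
      (Sym2.mem_iff.mpr (Or.inr rfl))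

/-- Two distinct dominoes in a cube with the same direction, plus any third distinct domino,
force a flip (or are impossible). -/
lemma two_same {R : Set V} {τ : Set (Sym2 V)}
    (hedges : ∀ e ∈ τ, ∃ u v : V, e = s(u, v) ∧ Adj u v ∧ u ∈ R ∧ v ∈ R)
    (hmatch : ∀ x ∈ R, ∃! e, e ∈ τ ∧ x ∈ e)
    (hflip : ¬ FlipGoal τ)
    (p a b c : V) (d f : Fin 3)
    (hca : InCube p a) (hca' : InCube p (a + unitVec d)) (hτa : s(a, a + unitVec d) ∈ τ)
    (hcb : InCube p b) (hcb' : InCube p (b + unitVec d)) (hτb : s(b, b + unitVec d) ∈ τ)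
    (hcc : InCube p c) (hcc' : InCube p (c + unitVec f)) (hτc : s(c, c + unitVec f) ∈ τ)
    (hab : s(a, a + unitVec d) ≠ s(b, b + unitVec d))
    (hac : s(a, a + unitVec d) ≠ s(c, c + unitVec f))
    (hbc : s(b, b + unitVec d) ≠ s(c, c + unitVec f)) : False := by
  have had : a d = p d := inCube_base hca hca'
  have hbd : b d = p d := inCube_base hcb hcb'
  have flip2 : ∀ (x y : V) (t : Fin 3), t ≠ d → s(x, x + unitVec d) ∈ τ →
      s(y, y + unitVec d) ∈ τ → (∀ l, l ≠ t → x l = y l) → x t + 1 = y t → False := by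
    intro x y t htd hx hy hagree hdiff
    apply hflip
    refine mk_flip htd hx hy ?_
    funext l
    by_cases hl : l = t
    · subst hl; rw [add_unitVec_same]; omega
    · rw [add_unitVec_other _ hl]; exact (hagree l hl).symm
  have hne : a ≠ b := fun h => hab (by rw [h])
  obtain ⟨j0, hj0⟩ := Function.ne_iff.mp hne
  have hj0d : j0 ≠ d := by rintro rfl; omega
  obtain ⟨k0, hk0d, hk0j, hall0⟩ := third_index d j0 hj0d
  by_cases hk : a k0 = b k0
  · -- a, b differ only at j0 : flip
    have hagree : ∀ l, l ≠ j0 → a l = b l := by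
      intro l hl
      rcases hall0 l with rfl | rfl | rfl
      exacts [by omega, absurd rfl hl, hk]
    have haj := hca j0; have hbj := hcb j0
    rcases haj with h1 | h1 <;> rcases hbj with h2 | h2
    · omega
    · exact flip2 a b j0 hj0d hτa hτb hagree (by omega)
    · exact flip2 b a j0 hj0d hτb hτa (fun l hl => (hagree l hl).symm) (by omega)
    · omega
  -- a, b diagonal: they differ at both j0 and k0
  have hdiag : ∀ (j k : Fin 3), j ≠ d → k ≠ d → k ≠ j →
      (∀ l : Fin 3, l = d ∨ l = j ∨ l = k) → a j ≠ b j → a k ≠ b k → f = j → False := by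
    intro j k hjd hkd hkj hall hj hk hfj
    have hccj : InCube p (c + unitVec j) := hfj ▸ hcc'
    have hτcj : s(c, c + unitVec j) ∈ τ := hfj ▸ hτc
    have hacj : s(a, a + unitVec d) ≠ s(c, c + unitVec j) := hfj ▸ hac
    have hbcj : s(b, b + unitVec d) ≠ s(c, c + unitVec j) := hfj ▸ hbc
    have hckab : c k = a k ∨ c k = b k := by
      rcases hcc k with h | h <;> rcases hca k with h1 | h1 <;> rcases hcb k with h2 | h2 <;>
        omega
    rcases hckab with h | h
    · exact hacj (cube_core hedges hmatch p a c d j k hjd hkd hkj hall hca had hτa hcc hccj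
        hτcj h)
    · exact hbcj (cube_core hedges hmatch p b c d j k hjd hkd hkj hall hcb hbd hτb hcc hccj
        hτcj h)
  by_cases hfd : f = d
  · -- third domino also has direction d
    rw [hfd] at hcc' hτc hac hbc
    have hcd : c d = p d := inCube_base hcc hcc'
    have hcj := hcc j0; have hck := hcc k0
    have haj := hca j0; have hbj := hcb j0
    have hak := hca k0; have hbk := hcb k0
    by_cases hc_j : c j0 = a j0 <;> by_cases hc_k : c k0 = a k0
    · exact hac (by rw [show a = c from funext fun l => by
        rcases hall0 l with rfl | rfl | rfl <;> omega])
    · -- c differs from a only at k0 → flip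
      rcases hak with h1 | h1 <;> rcases hck with h2 | h2
      · omega
      · exact flip2 a c k0 hk0d hτa hτc
          (fun l hl => by rcases hall0 l with rfl | rfl | rfl <;> omega) (by omega)
      · exact flip2 c a k0 hk0d hτc hτa
          (fun l hl => by rcases hall0 l with rfl | rfl | rfl <;> omega) (by omega)
      · omega
    · -- c differs from a only at j0 → flip
      rcases haj with h1 | h1 <;> rcases hcj with h2 | h2
      · omega
      · exact flip2 a c j0 hj0d hτa hτc
          (fun l hl => by rcases hall0 l with rfl | rfl | rfl <;> omega) (by omega)
      · exact flip2 c a j0 hj0d hτc hτa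
          (fun l hl => by rcases hall0 l with rfl | rfl | rfl <;> omega) (by omega)
      · omega
    · exact hbc (by rw [show b = c from funext fun l => by
        rcases hall0 l with rfl | rfl | rfl <;> omega])
  · -- f ≠ d, so f = j0 or f = k0
    rcases hall0 f with hf | hf | hf
    · exact absurd hf hfd
    · exact hdiag j0 k0 hj0d hk0d hk0j hall0 hj0 hk hf
    · exact hdiag k0 j0 hk0d hj0d (fun h => hk0j h.symm)
        (fun l => by rcases hall0 l with h | h | h <;> tauto) hk hj0 hf

/-- Core case analysis: three distinct dominoes inside one unit cube force a flip or a trit. -/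
lemma three_dominoes {R : Set V} {τ : Set (Sym2 V)}
    (hedges : ∀ e ∈ τ, ∃ u v : V, e = s(u, v) ∧ Adj u v ∧ u ∈ R ∧ v ∈ R)
    (hmatch : ∀ x ∈ R, ∃! e, e ∈ τ ∧ x ∈ e)
    (hflip : ¬ FlipGoal τ) (htrit : ¬ TritGoal τ)
    (p a₁ a₂ a₃ : V) (d₁ d₂ d₃ : Fin 3)
    (hc1 : InCube p a₁) (hc1' : InCube p (a₁ + unitVec d₁)) (ht1 : s(a₁, a₁ + unitVec d₁) ∈ τ)
    (hc2 : InCube p a₂) (hc2' : InCube p (a₂ + unitVec d₂)) (ht2 : s(a₂, a₂ + unitVec d₂) ∈ τ)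
    (hc3 : InCube p a₃) (hc3' : InCube p (a₃ + unitVec d₃)) (ht3 : s(a₃, a₃ + unitVec d₃) ∈ τ)
    (h12 : s(a₁, a₁ + unitVec d₁) ≠ s(a₂, a₂ + unitVec d₂))
    (h13 : s(a₁, a₁ + unitVec d₁) ≠ s(a₃, a₃ + unitVec d₃))
    (h23 : s(a₂, a₂ + unitVec d₂) ≠ s(a₃, a₃ + unitVec d₃)) : False := by
  by_cases e12 : d₁ = d₂
  · subst e12
    exact two_same hedges hmatch hflip p a₁ a₂ a₃ d₁ d₃ hc1 hc1' ht1 hc2 hc2' ht2 hc3 hc3' ht3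
      h12 h13 h23
  by_cases e13 : d₁ = d₃
  · subst e13
    exact two_same hedges hmatch hflip p a₁ a₃ a₂ d₁ d₂ hc1 hc1' ht1 hc3 hc3' ht3 hc2 hc2' ht2
      h13 h12 h23.symm
  by_cases e23 : d₂ = d₃
  · subst e23
    exact two_same hedges hmatch hflip p a₂ a₃ a₁ d₂ d₁ hc2 hc2' ht2 hc3 hc3' ht3 hc1 hc1' ht1
      h23 h12.symm h13.symm
  refine htrit ⟨p, _, _, _, ht1, ht2, ht3,
    not_parallel_of_ne _ _ e12, not_parallel_of_ne _ _ e13, not_parallel_of_ne _ _ e23,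
    ?_, ?_, ?_⟩ <;>
  · intro y hy
    rcases Sym2.mem_iff.mp hy with rfl | rfl <;> assumption


/-! ### one-dimensional interval counts -/

lemma oneD_le2 (N a : ℤ) :
    ((Finset.Icc (1:ℤ) (N-1)).filter (fun q => a = q ∨ a = q + 1)).card ≤ 2 := by
  classical
  have hsub : (Finset.Icc (1:ℤ) (N-1)).filter (fun q => a = q ∨ a = q + 1)
      ⊆ ({a - 1, a} : Finset ℤ) := by
    intro q hq
    simp only [Finset.mem_filter, Finset.mem_Icc, Finset.mem_insert,
      Finset.mem_singleton] at hq ⊢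
    omega
  calc ((Finset.Icc (1:ℤ) (N-1)).filter (fun q => a = q ∨ a = q + 1)).card
      ≤ ({a - 1, a} : Finset ℤ).card := Finset.card_le_card hsub
    _ ≤ 2 := (Finset.card_insert_le _ _).trans (by simp)

lemma oneD_corner {N : ℤ} (hN : 2 ≤ N) :
    ((Finset.Icc (1:ℤ) (N-1)).filter (fun q => (1:ℤ) = q ∨ (1:ℤ) = q + 1)).card = 1 := by
  classical
  rw [show (Finset.Icc (1:ℤ) (N-1)).filter (fun q => (1:ℤ) = q ∨ (1:ℤ) = q + 1)
      = ({1} : Finset ℤ) from by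
    ext q
    simp only [Finset.mem_filter, Finset.mem_Icc, Finset.mem_singleton]
    omega]
  exact Finset.card_singleton 1

lemma oneD_edge {N u : ℤ} (h1 : 1 ≤ u) (h2 : u + 1 ≤ N) :
    ((Finset.Icc (1:ℤ) (N-1)).filter
      (fun q => (u = q ∨ u = q + 1) ∧ (u + 1 = q ∨ u + 1 = q + 1))).card = 1 := by
  classical
  rw [show (Finset.Icc (1:ℤ) (N-1)).filter
      (fun q => (u = q ∨ u = q + 1) ∧ (u + 1 = q ∨ u + 1 = q + 1)) = ({u} : Finset ℤ) from by
    ext q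
    simp only [Finset.mem_filter, Finset.mem_Icc, Finset.mem_singleton]
    omega]
  exact Finset.card_singleton u

lemma oneD_cell {N pj : ℤ} (h1 : 1 ≤ pj) (h2 : pj ≤ N - 1) :
    ((Finset.Icc (1:ℤ) N).filter (fun a => a = pj ∨ a = pj + 1)).card = 2 := by
  classical
  rw [show (Finset.Icc (1:ℤ) N).filter (fun a => a = pj ∨ a = pj + 1)
      = ({pj, pj + 1} : Finset ℤ) from by
    ext q
    simp only [Finset.mem_filter, Finset.mem_Icc, Finset.mem_insert, Finset.mem_singleton]
    omega]
  rw [Finset.card_insert_of_notMem (by simp only [Finset.mem_singleton]; omega),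
    Finset.card_singleton]

/-! ### product formulas -/

lemma W_prod (nv x : V) :
    ((Finset.Icc (1 : V) (fun j => nv j - 1)).filter (fun p => InCube p x)).card
      = ∏ j, ((Finset.Icc (1:ℤ) (nv j - 1)).filter (fun q => x j = q ∨ x j = q + 1)).card := by
  classical
  rw [show (Finset.Icc (1 : V) (fun j => nv j - 1)).filter (fun p => InCube p x)
      = Fintype.piFinset (fun j =>
          (Finset.Icc (1:ℤ) (nv j - 1)).filter (fun q => x j = q ∨ x j = q + 1)) from by
    ext q
    rw [Finset.mem_filter]
    simp only [Finset.mem_filter, Finset.mem_Icc, Fintype.mem_piFinset, Pi.le_def,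
      Pi.one_apply, InCube]
    constructor
    · rintro ⟨⟨hl, hh⟩, hc⟩ j; exact ⟨⟨hl j, hh j⟩, hc j⟩
    · intro h; exact ⟨⟨fun j => (h j).1.1, fun j => (h j).1.2⟩, fun j => (h j).2⟩]
  rw [Fintype.card_piFinset]

lemma T_prod (nv u v : V) :
    ((Finset.Icc (1 : V) (fun j => nv j - 1)).filter (fun p => InCube p u ∧ InCube p v)).card
      = ∏ j, ((Finset.Icc (1:ℤ) (nv j - 1)).filter
          (fun q => (u j = q ∨ u j = q + 1) ∧ (v j = q ∨ v j = q + 1))).card := by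
  classical
  rw [show (Finset.Icc (1 : V) (fun j => nv j - 1)).filter (fun p => InCube p u ∧ InCube p v)
      = Fintype.piFinset (fun j =>
          (Finset.Icc (1:ℤ) (nv j - 1)).filter
            (fun q => (u j = q ∨ u j = q + 1) ∧ (v j = q ∨ v j = q + 1))) from by
    ext q
    rw [Finset.mem_filter]
    simp only [Finset.mem_filter, Finset.mem_Icc, Fintype.mem_piFinset, Pi.le_def,
      Pi.one_apply, InCube]
    constructor
    · rintro ⟨⟨hl, hh⟩, hc1, hc2⟩ j; exact ⟨⟨hl j, hh j⟩, hc1 j, hc2 j⟩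
    · intro h
      exact ⟨⟨fun j => (h j).1.1, fun j => (h j).1.2⟩, fun j => (h j).2.1, fun j => (h j).2.2⟩]
  rw [Fintype.card_piFinset]

lemma cell_prod (nv p : V) :
    ((Finset.Icc (1 : V) nv).filter (fun x => InCube p x)).card
      = ∏ j, ((Finset.Icc (1:ℤ) (nv j)).filter (fun a => a = p j ∨ a = p j + 1)).card := by
  classical
  rw [show (Finset.Icc (1 : V) nv).filter (fun x => InCube p x)
      = Fintype.piFinset (fun j =>
          (Finset.Icc (1:ℤ) (nv j)).filter (fun a => a = p j ∨ a = p j + 1)) from by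
    ext q
    rw [Finset.mem_filter]
    simp only [Finset.mem_filter, Finset.mem_Icc, Fintype.mem_piFinset, Pi.le_def,
      Pi.one_apply, InCube]
    constructor
    · rintro ⟨⟨hl, hh⟩, hc⟩ j; exact ⟨⟨hl j, hh j⟩, hc j⟩
    · intro h; exact ⟨⟨fun j => (h j).1.1, fun j => (h j).1.2⟩, fun j => (h j).2⟩]
  rw [Fintype.card_piFinset]

lemma cell_count (nv p : V) (hp : ∀ j, 1 ≤ p j ∧ p j ≤ nv j - 1) :
    ((Finset.Icc (1 : V) nv).filter (fun x => InCube p x)).card = 8 := by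
  rw [cell_prod, Fin.prod_univ_three,
    oneD_cell (hp 0).1 (hp 0).2, oneD_cell (hp 1).1 (hp 1).2, oneD_cell (hp 2).1 (hp 2).2]
  norm_num

/-! ### the key pointwise inequality -/

lemma key_W_le (nv u : V) (i : Fin 3) (hu : ∀ j, 1 ≤ u j ∧ u j ≤ nv j) (hui : u i + 1 ≤ nv i)
    (x : V) (hx : x = u ∨ x = u + unitVec i) :
    ((Finset.Icc (1 : V) (fun j => nv j - 1)).filter (fun p => InCube p x)).card
      ≤ 2 * ((Finset.Icc (1 : V) (fun j => nv j - 1)).filter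
          (fun p => InCube p u ∧ InCube p (u + unitVec i))).card := by
  classical
  rw [W_prod, T_prod]
  set W : Fin 3 → ℕ := fun j =>
    ((Finset.Icc (1:ℤ) (nv j - 1)).filter (fun q => x j = q ∨ x j = q + 1)).card with hWdef
  set T : Fin 3 → ℕ := fun j =>
    ((Finset.Icc (1:ℤ) (nv j - 1)).filter
      (fun q => (u j = q ∨ u j = q + 1) ∧ ((u + unitVec i) j = q ∨ (u + unitVec i) j = q + 1))).card
    with hTdef
  have hTi : T i = 1 := by
    have h1 : (u + unitVec i) i = u i + 1 := add_unitVec_same _ _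
    simp only [hTdef, h1]
    exact oneD_edge (hu i).1 hui
  have htrans : ∀ j, j ≠ i → T j = W j := by
    intro j hj
    have h1 : (u + unitVec i) j = u j := add_unitVec_other _ hj
    have h2 : x j = u j := by
      rcases hx with rfl | rfl
      · rfl
      · exact add_unitVec_other _ hj
    simp only [hTdef, hWdef, h1, h2, and_self]
  have hWi : W i ≤ 2 := oneD_le2 _ _
  have hsplitW : ∏ j, W j = W i * ∏ j ∈ Finset.univ.erase i, W j :=
    (Finset.mul_prod_erase Finset.univ W (Finset.mem_univ i)).symm
  have hsplitT : ∏ j, T j = T i * ∏ j ∈ Finset.univ.erase i, T j :=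
    (Finset.mul_prod_erase Finset.univ T (Finset.mem_univ i)).symm
  have hrest : ∏ j ∈ Finset.univ.erase i, T j = ∏ j ∈ Finset.univ.erase i, W j :=
    Finset.prod_congr rfl fun j hj => htrans j (Finset.mem_erase.mp hj).1
  rw [hsplitW, hsplitT, hTi, hrest, one_mul]
  exact Nat.mul_le_mul hWi le_rfl

lemma key_corner (nv : V) (hnv : ∀ j, 2 ≤ nv j) (i : Fin 3) :
    ((Finset.Icc (1 : V) (fun j => nv j - 1)).filter (fun p => InCube p (1:V))).card
      < 2 * ((Finset.Icc (1 : V) (fun j => nv j - 1)).filter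
          (fun p => InCube p (1:V) ∧ InCube p ((1:V) + unitVec i))).card := by
  classical
  rw [W_prod, T_prod]
  have hone : ∀ j : Fin 3, (1 : V) j = (1 : ℤ) := fun j => rfl
  have hW : (∏ j, ((Finset.Icc (1:ℤ) (nv j - 1)).filter
      (fun q => (1:V) j = q ∨ (1:V) j = q + 1)).card) = 1 := by
    apply Finset.prod_eq_one
    intro j _
    simp only [hone]
    exact oneD_corner (hnv j)
  have hT : (∏ j, ((Finset.Icc (1:ℤ) (nv j - 1)).filter
      (fun q => ((1:V) j = q ∨ (1:V) j = q + 1) ∧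
        (((1:V) + unitVec i) j = q ∨ ((1:V) + unitVec i) j = q + 1))).card) = 1 := by
    apply Finset.prod_eq_one
    intro j _
    by_cases hj : j = i
    · subst hj
      have h1 : ((1:V) + unitVec j) j = (1:ℤ) + 1 := by
        rw [add_unitVec_same]; norm_num
      simp only [hone, h1]
      exact oneD_edge le_rfl (hnv j)
    · have h1 : ((1:V) + unitVec i) j = (1 : ℤ) := by
        rw [add_unitVec_other _ hj]; rfl
      simp only [hone, h1, and_self]
      exact oneD_corner (hnv j)
  rw [hW, hT]
  norm_num


/-- In a flip-free, trit-free matching, every unit cube contains at most two dominoes,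
i.e. at most 4 vertices matched inside the cube. -/
lemma cube_card_le {R : Set V} {τ : Set (Sym2 V)}
    (hedges : ∀ e ∈ τ, ∃ u v : V, e = s(u, v) ∧ Adj u v ∧ u ∈ R ∧ v ∈ R)
    (hmatch : ∀ x ∈ R, ∃! e, e ∈ τ ∧ x ∈ e)
    (hflip : ¬ FlipGoal τ) (htrit : ¬ TritGoal τ)
    (m : V → V) (hm : ∀ x ∈ R, s(x, m x) ∈ τ ∧ m x ∈ R ∧ Adj x (m x))
    (Rf : Finset V) (hRf : ∀ x, x ∈ Rf ↔ x ∈ R) (p : V) :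
    (Rf.filter (fun x => InCube p x ∧ InCube p (m x))).card ≤ 4 := by
  classical
  by_contra hcon
  push_neg at hcon
  set S := Rf.filter (fun x => InCube p x ∧ InCube p (m x)) with hS
  set B := S.image (fun x => s(x, m x)) with hB
  have hfib : ∀ e ∈ B, (S.filter (fun y => s(y, m y) = e)).card ≤ 2 := by
    intro e he
    obtain ⟨x, hxS, hxe⟩ := Finset.mem_image.mp he
    have hsub : S.filter (fun y => s(y, m y) = e) ⊆ {x, m x} := by
      intro y hy
      obtain ⟨hyS, hye⟩ := Finset.mem_filter.mp hy
      rw [← hxe] at hye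
      rcases Sym2.eq_iff.mp hye with ⟨h1, -⟩ | ⟨h1, -⟩ <;> simp [h1]
    exact (Finset.card_le_card hsub).trans ((Finset.card_insert_le _ _).trans (by simp))
  have hcardB : 3 ≤ B.card := by
    have h2 := Finset.card_le_mul_card_image (f := fun y => s(y, m y)) S 2 hfib
    rw [← hB] at h2
    omega
  obtain ⟨e₁, he₁⟩ := Finset.card_pos.mp (by omega : 0 < B.card)
  have h2 : 0 < (B.erase e₁).card := by rw [Finset.card_erase_of_mem he₁]; omega
  obtain ⟨e₂, he₂'⟩ := Finset.card_pos.mp h2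
  obtain ⟨hne₂₁, he₂⟩ := Finset.mem_erase.mp he₂'
  have h3 : 0 < ((B.erase e₁).erase e₂).card := by
    rw [Finset.card_erase_of_mem he₂', Finset.card_erase_of_mem he₁]; omega
  obtain ⟨e₃, he₃'⟩ := Finset.card_pos.mp h3
  obtain ⟨hne₃₂, he₃''⟩ := Finset.mem_erase.mp he₃'
  obtain ⟨hne₃₁, he₃⟩ := Finset.mem_erase.mp he₃''
  have norm : ∀ e ∈ B, ∃ (a : V) (d : Fin 3), InCube p a ∧ InCube p (a + unitVec d) ∧
      s(a, a + unitVec d) ∈ τ ∧ s(a, a + unitVec d) = e := by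
    intro e he
    obtain ⟨x, hxS, rfl⟩ := Finset.mem_image.mp he
    obtain ⟨hxRf, hcx, hcmx⟩ := Finset.mem_filter.mp hxS
    obtain ⟨hτx, hmxR, hadj⟩ := hm x ((hRf x).mp hxRf)
    obtain ⟨i, hor | hor⟩ := hadj
    · exact ⟨x, i, hcx, hor ▸ hcmx, hor ▸ hτx, by rw [hor]⟩
    · refine ⟨m x, i, hcmx, hor ▸ hcx, ?_, ?_⟩
      · rw [← hor, Sym2.eq_swap]; exact hτx
      · rw [← hor, Sym2.eq_swap]
  obtain ⟨a₁, d₁, hc1, hc1', ht1, heq1⟩ := norm e₁ he₁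
  obtain ⟨a₂, d₂, hc2, hc2', ht2, heq2⟩ := norm e₂ he₂
  obtain ⟨a₃, d₃, hc3, hc3', ht3, heq3⟩ := norm e₃ he₃
  exact three_dominoes hedges hmatch hflip htrit p a₁ a₂ a₃ d₁ d₂ d₃
    hc1 hc1' ht1 hc2 hc2' ht2 hc3 hc3' ht3
    (by rw [heq1, heq2]; exact fun h => hne₂₁ h.symm)
    (by rw [heq1, heq3]; exact fun h => hne₃₁ h.symm)
    (by rw [heq2, heq3]; exact fun h => hne₃₂ h.symm)

/-- **Every dimer tiling of a box admits a flip or a trit.** If `n₁, n₂, n₃ ≥ 2` with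
`n₁n₂n₃` even and `τ` is a perfect matching of the induced subgraph of the grid graph on
`R = {1,…,n₁}×{1,…,n₂}×{1,…,n₃}`, then either two edges of `τ` form opposite sides of a unit
lattice square, or three pairwise non-parallel edges of `τ` lie in a single unit lattice
cube. -/
theorem statement3 (n₁ n₂ n₃ : ℤ) (h₁ : 2 ≤ n₁) (h₂ : 2 ≤ n₂) (h₃ : 2 ≤ n₃)
    (heven : Even (n₁ * n₂ * n₃))
    (R : Set V)
    (hR : R = {x : V | (1 ≤ x 0 ∧ x 0 ≤ n₁) ∧ (1 ≤ x 1 ∧ x 1 ≤ n₂) ∧ (1 ≤ x 2 ∧ x 2 ≤ n₃)})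
    (τ : Set (Sym2 V))
    (hedges : ∀ e ∈ τ, ∃ u v : V, e = s(u, v) ∧ Adj u v ∧ u ∈ R ∧ v ∈ R)
    (hmatch : ∀ x ∈ R, ∃! e, e ∈ τ ∧ x ∈ e) :
    (∃ (x : V) (i j : Fin 3), i ≠ j ∧ s(x, x + unitVec i) ∈ τ ∧
        s(x + unitVec j, x + unitVec i + unitVec j) ∈ τ) ∨
      (∃ (x : V) (e₁ e₂ e₃ : Sym2 V), e₁ ∈ τ ∧ e₂ ∈ τ ∧ e₃ ∈ τ ∧
        ¬ Parallel e₁ e₂ ∧ ¬ Parallel e₁ e₃ ∧ ¬ Parallel e₂ e₃ ∧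
        (∀ y ∈ e₁, InCube x y) ∧ (∀ y ∈ e₂, InCube x y) ∧ (∀ y ∈ e₃, InCube x y)) := by
  classical
  by_contra hgoal
  rw [not_or] at hgoal
  obtain ⟨hflip, htrit⟩ := hgoal
  have hflip' : ¬ FlipGoal τ := hflip
  have htrit' : ¬ TritGoal τ := htrit
  set nv : V := fun j => if j = 0 then n₁ else if j = 1 then n₂ else n₃ with hnvdef
  have hnv2 : ∀ j, 2 ≤ nv j := by
    intro j
    fin_cases j <;> simp [hnvdef] <;> omega
  have hmemR : ∀ x : V, x ∈ R ↔ ∀ j, 1 ≤ x j ∧ x j ≤ nv j := by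
    intro x
    rw [hR]
    simp only [Set.mem_setOf_eq]
    constructor
    · rintro ⟨⟨a0, b0⟩, ⟨a1, b1⟩, a2, b2⟩ j
      fin_cases j
      · exact ⟨a0, b0⟩
      · exact ⟨a1, b1⟩
      · exact ⟨a2, b2⟩
    · intro h
      exact ⟨⟨(h 0).1, (h 0).2⟩, ⟨(h 1).1, (h 1).2⟩, (h 2).1, (h 2).2⟩
  set Rf : Finset V := Finset.Icc (1 : V) nv with hRfdef
  have hRf : ∀ x, x ∈ Rf ↔ x ∈ R := by
    intro x
    rw [hmemR, hRfdef, Finset.mem_Icc]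
    constructor
    · rintro ⟨hl, hh⟩ j; exact ⟨hl j, hh j⟩
    · intro h; exact ⟨fun j => (h j).1, fun j => (h j).2⟩
  set Pf : Finset V := Finset.Icc (1 : V) (fun j => nv j - 1) with hPfdef
  -- the partner function
  have hm0 : ∀ x : V, ∃ y, x ∈ R → (s(x, y) ∈ τ ∧ y ∈ R ∧ Adj x y) := by
    intro x
    by_cases hx : x ∈ R
    · obtain ⟨e, ⟨heτ, hxe⟩, -⟩ := hmatch x hx
      obtain ⟨u, v, rfl, hadj, hu, hv⟩ := hedges e heτ
      rcases Sym2.mem_iff.mp hxe with rfl | rfl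
      · exact ⟨v, fun _ => ⟨heτ, hv, hadj⟩⟩
      · exact ⟨u, fun _ => ⟨by rw [Sym2.eq_swap]; exact heτ, hu, adj_symm hadj⟩⟩
    · exact ⟨x, fun h => absurd h hx⟩
  choose m hm using hm0
  -- weights
  set Wc : V → ℕ := fun x => (Pf.filter (fun p => InCube p x)).card with hWc
  set Tc : V → ℕ := fun x => (Pf.filter (fun p => InCube p x ∧ InCube p (m x))).card with hTc
  set Kc : V → ℕ := fun p => (Rf.filter (fun x => InCube p x ∧ InCube p (m x))).card with hKc
  have hswapT : ∑ p ∈ Pf, Kc p = ∑ x ∈ Rf, Tc x := by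
    simp only [hKc, hTc, Finset.card_filter]
    exact Finset.sum_comm
  have hswapW : ∑ x ∈ Rf, Wc x = 8 * Pf.card := by
    have hsw : ∑ x ∈ Rf, Wc x = ∑ p ∈ Pf, (Rf.filter (fun x => InCube p x)).card := by
      simp only [hWc, Finset.card_filter]
      exact Finset.sum_comm
    have h8 : ∀ p ∈ Pf, (Rf.filter (fun x => InCube p x)).card = 8 := by
      intro p hp
      rw [hPfdef, Finset.mem_Icc] at hp
      have hp' : ∀ j, 1 ≤ p j ∧ p j ≤ nv j - 1 := fun j => ⟨hp.1 j, hp.2 j⟩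
      rw [hRfdef]
      exact cell_count nv p hp'
    rw [hsw, Finset.sum_congr rfl h8, Finset.sum_const, smul_eq_mul, mul_comm]
  have hptwise : ∀ x ∈ Rf, Wc x ≤ 2 * Tc x := by
    intro x hxf
    have hxR := (hRf x).mp hxf
    obtain ⟨hτx, hmxR, hadj⟩ := hm x hxR
    have hxco : ∀ j, 1 ≤ x j ∧ x j ≤ nv j := (hmemR x).mp hxR
    have hmco : ∀ j, 1 ≤ (m x) j ∧ (m x) j ≤ nv j := (hmemR _).mp hmxR
    obtain ⟨i, hor | hor⟩ := hadj
    · have hui : x i + 1 ≤ nv i := by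
        have h := (hmco i).2
        rw [hor, add_unitVec_same] at h
        exact h
      have hkey := key_W_le nv x i hxco hui x (Or.inl rfl)
      simp only [hWc, hTc, hPfdef]
      rw [hor]
      exact hkey
    · have hui : (m x) i + 1 ≤ nv i := by
        have h := (hxco i).2
        rw [hor, add_unitVec_same] at h
        exact h
      have hkey := key_W_le nv (m x) i hmco hui x (Or.inr hor)
      rw [← hor] at hkey
      have hcomm : ((Finset.Icc (1 : V) (fun j => nv j - 1)).filter
          (fun p => InCube p (m x) ∧ InCube p x))
          = ((Finset.Icc (1 : V) (fun j => nv j - 1)).filter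
          (fun p => InCube p x ∧ InCube p (m x))) := by
        apply Finset.filter_congr
        intro p _
        exact and_comm
      rw [hcomm] at hkey
      simp only [hWc, hTc, hPfdef]
      exact hkey
  have hcornerR : (1 : V) ∈ R := by
    rw [hmemR]
    intro j
    refine ⟨le_refl _, ?_⟩
    have := hnv2 j
    show (1:ℤ) ≤ nv j
    omega
  have hcornerRf : (1 : V) ∈ Rf := (hRf 1).mpr hcornerR
  have hcorner : Wc 1 < 2 * Tc 1 := by
    obtain ⟨hτ1, hm1R, hadj1⟩ := hm 1 hcornerR
    obtain ⟨i, hor | hor⟩ := hadj1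
    · simp only [hWc, hTc, hPfdef]
      rw [hor]
      exact key_corner nv hnv2 i
    · exfalso
      have h := congrFun hor i
      rw [add_unitVec_same] at h
      have h1 := ((hmemR _).mp hm1R) i
      have : (1 : V) i = 1 := rfl
      omega
  have hcube : ∀ p, Kc p ≤ 4 := by
    intro p
    simp only [hKc]
    exact cube_card_le hedges hmatch hflip' htrit' m
      (fun x hx => hm x hx) Rf hRf p
  have hupper : ∑ p ∈ Pf, Kc p ≤ 4 * Pf.card := by
    calc ∑ p ∈ Pf, Kc p ≤ ∑ _p ∈ Pf, 4 := Finset.sum_le_sum (fun p _ => hcube p)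
      _ = 4 * Pf.card := by rw [Finset.sum_const, smul_eq_mul, mul_comm]
  have hlower : ∑ x ∈ Rf, Wc x < ∑ x ∈ Rf, 2 * Tc x :=
    Finset.sum_lt_sum hptwise ⟨1, hcornerRf, hcorner⟩
  rw [hswapW, ← Finset.mul_sum, ← hswapT] at hlower
  omega

end Dimers
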